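/- Let a, b, m > 0 and p, q : ℕ → ℝ increasing with p(n)/n^m → a, q(n)/n^m → b. Then for every r with 0 < r < 1 there exist strictly increasing sequences of indices i_n, j_n such that q(j_n)/(q(j_n) + p(i_n)) → r. Equivalently, with h_n = 1/p(n), k_n = 1/q(n): h_{i_n}/(h_{i_n} + k_{j_n}) → r. -/

import Mathlib

open Filter Topology

theorem poly_decay_ratio_dense (a b m : ℝ) (ha : 0 < a) (hb : 0 < b) (hm : 0 < m)
    (p q : ℕ → ℝ) (hp : StrictMono p) (hq : StrictMono q)
    (hpa : Tendsto (fun n => p n / (n : ℝ) ^ m) atTop (𝓝 a))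
    (hqb : Tendsto (fun n => q n / (n : ℝ) ^ m) atTop (𝓝 b))
    (r : ℝ) (hr0 : 0 < r) (hr1 : r < 1) :
    ∃ i j : ℕ → ℕ, StrictMono i ∧ StrictMono j ∧
      Tendsto (fun n => q (j n) / (q (j n) + p (i n))) atTop (𝓝 r) := by
  have h1r : 0 < 1 - r := by linarith
  set t : ℝ := r / (1 - r) with ht
  have ht0 : 0 < t := div_pos hr0 h1r
  set c : ℝ := (t * a / b) ^ (m⁻¹ : ℝ) with hc
  have htab : 0 < t * a / b := by positivity
  have hc0 : 0 < c := Real.rpow_pos_of_pos htab _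
  have hcm : c ^ m = t * a / b := Real.rpow_inv_rpow htab.le hm.ne'
  -- choose a natural K with K ≥ 1 and c * K ≥ 1
  obtain ⟨K, hK⟩ := exists_nat_ge (max 1 c⁻¹)
  have hK1 : (1 : ℝ) ≤ K := le_trans (le_max_left _ _) hK
  have hKc : 1 ≤ c * K := by
    have : c⁻¹ ≤ (K : ℝ) := le_trans (le_max_right _ _) hK
    calc (1:ℝ) = c * c⁻¹ := by field_simp
    _ ≤ c * K := by exact mul_le_mul_of_nonneg_left this hc0.le
  have hKpos : 0 < K := by exact_mod_cast lt_of_lt_of_le zero_lt_one hK1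
  set i : ℕ → ℕ := fun n => K * n with hi
  set j : ℕ → ℕ := fun n => ⌊c * (K * n : ℕ)⌋₊ with hj
  have hmono_i : StrictMono i := fun x y h => Nat.mul_lt_mul_of_pos_left h hKpos
  have hmono_j : StrictMono j := by
    apply strictMono_nat_of_lt_succ
    intro n
    have h0 : (0:ℝ) ≤ c * (K * n : ℕ) := by positivity
    have hle : c * ((K * n : ℕ) : ℝ) + 1 ≤ c * ((K * (n+1) : ℕ) : ℝ) := by
      push_cast
      nlinarith [hKc]
    have : (⌊c * (K * n : ℕ)⌋₊ + 1 : ℝ) ≤ c * ((K * (n+1) : ℕ) : ℝ) := by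
      calc (⌊c * (K * n : ℕ)⌋₊ + 1 : ℝ) ≤ c * ((K * n : ℕ) : ℝ) + 1 := by
            have := Nat.floor_le h0; linarith
        _ ≤ _ := hle
    have := Nat.le_floor (α := ℝ) (by exact_mod_cast this : ((⌊c * (K * n : ℕ)⌋₊ + 1 : ℕ) : ℝ) ≤ c * ((K * (n+1) : ℕ) : ℝ))
    simpa [hj] using this
  have hi_top : Tendsto i atTop atTop := hmono_i.tendsto_atTop
  have hj_top : Tendsto j atTop atTop := hmono_j.tendsto_atTop
  have hiR_top : Tendsto (fun n => ((i n : ℕ) : ℝ)) atTop atTop :=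
    tendsto_natCast_atTop_atTop.comp hi_top
  -- A n → a, B n → b
  have hA : Tendsto (fun n => p (i n) / ((i n : ℕ) : ℝ) ^ m) atTop (𝓝 a) := hpa.comp hi_top
  have hB : Tendsto (fun n => q (j n) / ((j n : ℕ) : ℝ) ^ m) atTop (𝓝 b) := hqb.comp hj_top
  -- C n = j n / i n → c
  have hC : Tendsto (fun n => ((j n : ℕ) : ℝ) / ((i n : ℕ) : ℝ)) atTop (𝓝 c) := by
    have hinv : Tendsto (fun n => 1 / ((i n : ℕ) : ℝ)) atTop (𝓝 0) := by
      simpa [Pi.inv_def] using hiR_top.inv_tendsto_atTop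
    have hlo : Tendsto (fun n => c - 1 / ((i n : ℕ) : ℝ)) atTop (𝓝 c) := by
      simpa using tendsto_const_nhds.sub hinv
    apply tendsto_of_tendsto_of_tendsto_of_le_of_le' hlo tendsto_const_nhds
    · filter_upwards [hi_top.eventually_ge_atTop 1] with n hn
      have hipos : (0:ℝ) < ((i n : ℕ) : ℝ) := by exact_mod_cast hn
      rw [sub_le_iff_le_add, ← add_div, le_div_iff₀ hipos]
      have h0 : (0:ℝ) ≤ c * ((i n : ℕ) : ℝ) := by positivity
      have := Nat.lt_floor_add_one (c * ((i n : ℕ) : ℝ))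
      have hjn : c * ((i n : ℕ) : ℝ) < (j n : ℝ) + 1 := by
        simpa [hj, hi] using this
      nlinarith
    · filter_upwards [hi_top.eventually_ge_atTop 1] with n hn
      have hipos : (0:ℝ) < ((i n : ℕ) : ℝ) := by exact_mod_cast hn
      rw [div_le_iff₀ hipos]
      have h0 : (0:ℝ) ≤ c * ((i n : ℕ) : ℝ) := by positivity
      have := Nat.floor_le h0
      simpa [hj, hi] using this
  have hCm : Tendsto (fun n => (((j n : ℕ) : ℝ) / ((i n : ℕ) : ℝ)) ^ m) atTop (𝓝 (c ^ m)) :=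
    hC.rpow_const (Or.inl hc0.ne')
  -- eventual positivity of p and q
  have hp_pos : ∀ᶠ n in atTop, 0 < p n := by
    have := hpa.eventually (eventually_gt_nhds (by linarith : a / 2 < a))
    filter_upwards [this, eventually_ge_atTop 1] with n h hn
    have hnpos : (0:ℝ) < (n:ℝ) ^ m := Real.rpow_pos_of_pos (by exact_mod_cast hn) m
    by_contra hcon
    push_neg at hcon
    have : p n / (n:ℝ) ^ m ≤ 0 := div_nonpos_of_nonpos_of_nonneg hcon hnpos.le
    nlinarith
  have hq_pos : ∀ᶠ n in atTop, 0 < q n := by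
    have := hqb.eventually (eventually_gt_nhds (by linarith : b / 2 < b))
    filter_upwards [this, eventually_ge_atTop 1] with n h hn
    have hnpos : (0:ℝ) < (n:ℝ) ^ m := Real.rpow_pos_of_pos (by exact_mod_cast hn) m
    by_contra hcon
    push_neg at hcon
    have : q n / (n:ℝ) ^ m ≤ 0 := div_nonpos_of_nonpos_of_nonneg hcon hnpos.le
    nlinarith
  have hpi_pos : ∀ᶠ n in atTop, 0 < p (i n) := hi_top.eventually hp_pos
  have hqj_pos : ∀ᶠ n in atTop, 0 < q (j n) := hj_top.eventually hq_pos
  -- G n = q (j n) / p (i n) → t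
  have hG : Tendsto (fun n => q (j n) / p (i n)) atTop (𝓝 t) := by
    have hlim : Tendsto
        (fun n => q (j n) / ((j n : ℕ) : ℝ) ^ m * ((((j n : ℕ) : ℝ) / ((i n : ℕ) : ℝ)) ^ m)
          / (p (i n) / ((i n : ℕ) : ℝ) ^ m)) atTop (𝓝 (b * c ^ m / a)) :=
      (hB.mul hCm).div hA ha.ne'
    have heq : b * c ^ m / a = t := by
      rw [hcm]; field_simp
    rw [heq] at hlim
    refine hlim.congr' ?_
    filter_upwards [hpi_pos, hi_top.eventually_ge_atTop 1, hj_top.eventually_ge_atTop 1]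
      with n hpn hin hjn
    have hipos : (0:ℝ) < ((i n : ℕ) : ℝ) := by exact_mod_cast hin
    have hjpos : (0:ℝ) < ((j n : ℕ) : ℝ) := by exact_mod_cast hjn
    have him : (0:ℝ) < ((i n : ℕ) : ℝ) ^ m := Real.rpow_pos_of_pos hipos m
    have hjm : (0:ℝ) < ((j n : ℕ) : ℝ) ^ m := Real.rpow_pos_of_pos hjpos m
    rw [Real.div_rpow hjpos.le hipos.le]
    field_simp
  -- conclude
  refine ⟨i, j, hmono_i, hmono_j, ?_⟩
  have hfin : Tendsto (fun n => (q (j n) / p (i n)) / (q (j n) / p (i n) + 1)) atTop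
      (𝓝 (t / (t + 1))) :=
    hG.div (hG.add tendsto_const_nhds) (by positivity)
  have htr : t / (t + 1) = r := by
    rw [ht]; field_simp; ring
  rw [htr] at hfin
  refine hfin.congr' ?_
  filter_upwards [hpi_pos, hqj_pos] with n hpn hqn
  have hsum : 0 < q (j n) + p (i n) := by linarith
  field_simp
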